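/- Let C be a 2×N real matrix with nonnegative entries and 1 ≤ p ≤ 2, and define the polar power C^{[p−1]} = (CC^T)^{(p−2)/2} C (assuming CC^T invertible). If an entry C_{ij} = 0, then the corresponding entry (C^{[p−1]})_{ij} is nonpositive. -/
import Mathlib


open Matrix

open scoped Classical in
/-- The `r`-th power `M^r` of a Hermitian real matrix, via the spectral decomposition. -/
noncomputable def matRpow {n : Type*} [Fintype n] [DecidableEq n]
    (M : Matrix n n ℝ) (r : ℝ) : Matrix n n ℝ :=
  if h : M.IsHermitian then
    (h.eigenvectorUnitary : Matrix n n ℝ) *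
      Matrix.diagonal (fun i => h.eigenvalues i ^ r) *
        (h.eigenvectorUnitary : Matrix n n ℝ)ᴴ
  else 0

/-- If `x ↦ x ^ r` agrees with the affine map `x ↦ β x + α` on all eigenvalues of a
Hermitian matrix `A`, then `matRpow A r = β • A + α • 1`. -/
lemma matRpow_eq_affine {n : Type*} [Fintype n] [DecidableEq n]
    (A : Matrix n n ℝ) (hA : A.IsHermitian) (r β α : ℝ)
    (h : ∀ m, hA.eigenvalues m ^ r = β * hA.eigenvalues m + α) :
    matRpow A r = β • A + α • (1 : Matrix n n ℝ) := by
  rw [matRpow, dif_pos hA]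
  have hd : (Matrix.diagonal fun m => hA.eigenvalues m ^ r)
      = β • Matrix.diagonal hA.eigenvalues + α • (1 : Matrix n n ℝ) := by
    ext a b
    by_cases hab : a = b
    · subst hab
      simp [Matrix.diagonal_apply_eq, Matrix.one_apply_eq, h a]
    · simp [Matrix.diagonal_apply_ne _ hab, Matrix.one_apply_ne hab]
  rw [hd, Matrix.mul_add, Matrix.add_mul, Matrix.mul_smul, Matrix.mul_smul,
    Matrix.smul_mul, Matrix.smul_mul, Matrix.mul_one]
  have hU : (hA.eigenvectorUnitary : Matrix n n ℝ) *
      (hA.eigenvectorUnitary : Matrix n n ℝ)ᴴ = 1 := by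
    rw [← Matrix.star_eq_conjTranspose]
    exact (Matrix.mem_unitaryGroup_iff).mp hA.eigenvectorUnitary.2
  have hspec : (hA.eigenvectorUnitary : Matrix n n ℝ) *
      Matrix.diagonal hA.eigenvalues * (hA.eigenvectorUnitary : Matrix n n ℝ)ᴴ = A := by
    rw [← Matrix.star_eq_conjTranspose]
    have := hA.spectral_theorem
    simpa [Function.comp] using this.symm
  rw [hU, hspec]

/-- for a 2×N entrywise-nonnegative real matrix `C` with `CCᵀ` positive
definite and `1 ≤ p ≤ 2`, a zero entry `C_{ij} = 0` forces the corresponding entry of the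
polar power `C^{[p−1]} = (CCᵀ)^{(p−2)/2} C` to be nonpositive. -/
theorem stmt14 (N : ℕ) (C : Matrix (Fin 2) (Fin N) ℝ) (hC : ∀ i j, 0 ≤ C i j)
    (p : ℝ) (hp1 : 1 ≤ p) (hp2 : p ≤ 2)
    (hpd : (C * Cᴴ).PosDef)
    (i : Fin 2) (j : Fin N) (hij : C i j = 0) :
    (matRpow (C * Cᴴ) ((p - 2) / 2) * C) i j ≤ 0 := by
  set A : Matrix (Fin 2) (Fin 2) ℝ := C * Cᴴ with hAdef
  have hA : A.IsHermitian := hpd.isHermitian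
  set r : ℝ := (p - 2) / 2 with hrdef
  have hr : r ≤ 0 := by
    rw [hrdef]; nlinarith
  set μ : Fin 2 → ℝ := hA.eigenvalues with hμ
  have hμpos : ∀ m, 0 < μ m := fun m => hpd.eigenvalues_pos m
  -- choose affine interpolation
  obtain ⟨β, α, haff, hβ⟩ : ∃ β α : ℝ, (∀ m, μ m ^ r = β * μ m + α) ∧ β ≤ 0 := by
    by_cases heq : μ 0 = μ 1
    · refine ⟨0, μ 0 ^ r, fun m => ?_, le_refl 0⟩
      have hm : m = 0 ∨ m = 1 := by omega
      rcases hm with hm | hm <;> subst hm <;> simp [heq]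
    · refine ⟨(μ 0 ^ r - μ 1 ^ r) / (μ 0 - μ 1),
        μ 0 ^ r - (μ 0 ^ r - μ 1 ^ r) / (μ 0 - μ 1) * μ 0, fun m => ?_, ?_⟩
      · have hne : μ 0 - μ 1 ≠ 0 := sub_ne_zero.mpr heq
        have hm : m = 0 ∨ m = 1 := by omega
        rcases hm with hm | hm <;> subst hm
        · ring
        · field_simp
          ring
      · rcases lt_or_gt_of_ne heq with hlt | hgt
        · apply div_nonpos_of_nonneg_of_nonpos
          · have := Real.rpow_le_rpow_of_nonpos (hμpos 0) hlt.le hr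
            linarith
          · linarith
        · apply div_nonpos_of_nonpos_of_nonneg
          · have := Real.rpow_le_rpow_of_nonpos (hμpos 1) hgt.le hr
            linarith
          · linarith
  have hrw : matRpow A r = β • A + α • (1 : Matrix (Fin 2) (Fin 2) ℝ) :=
    matRpow_eq_affine A hA r β α haff
  rw [hrw, Matrix.add_mul, Matrix.smul_mul, Matrix.smul_mul]
  have hAC : 0 ≤ (A * C) i j := by
    rw [Matrix.mul_apply]
    apply Finset.sum_nonneg
    intro k _
    apply mul_nonneg _ (hC k j)
    rw [hAdef, Matrix.mul_apply]
    apply Finset.sum_nonneg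
    intro m _
    simpa using mul_nonneg (hC i m) (hC k m)
  have : (β • (A * C) + α • ((1 : Matrix (Fin 2) (Fin 2) ℝ) * C)) i j
      = β * (A * C) i j + α * C i j := by
    simp
  rw [this, hij, mul_zero, add_zero]
  exact mul_nonpos_of_nonpos_of_nonneg hβ hAC
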